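/- arXiv:2510.22307 — 2 statements merged into one kernel-verified Lean document; each statement's English description precedes it below -/
import Mathlib

section
/- Let f, g : {0,1}^n → ℝ. Then ∑_{S ⊆ [n], |S| ≥ 2} f̂(S)·ĝ(S) = (1/8)·∑_{1 ≤ i < j ≤ n} ∫_0^∞ (e^{t} − 1)·E[D_{ij} f · P_t(D_{ij} g)] dt, where D_i f(x) = f(x) − f(x⊕e_i) and D_{ij} = D_i ∘ D_j. -/
open Finset MeasureTheory

/-- Expectation with respect to the uniform measure on `{0,1}^n`. -/
noncomputable def Ev (n : ℕ) (f : (Fin n → Bool) → ℝ) : ℝ :=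
  (∑ x : Fin n → Bool, f x) / 2 ^ n

/-- `f` is increasing (monotone w.r.t. the coordinatewise order). -/
def Increasing' (n : ℕ) (f : (Fin n → Bool) → ℝ) : Prop :=
  ∀ x y : Fin n → Bool, (∀ i, x i ≤ y i) → f x ≤ f y

/-- `f` is submodular: `f(x∧y) + f(x∨y) ≤ f(x) + f(y)`. -/
def Submodular' (n : ℕ) (f : (Fin n → Bool) → ℝ) : Prop :=
  ∀ x y : Fin n → Bool,
    f (fun i => x i && y i) + f (fun i => x i || y i) ≤ f x + f y

/-- `f` is supermodular: `f(x) + f(y) ≤ f(x∧y) + f(x∨y)`. -/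
def Supermodular' (n : ℕ) (f : (Fin n → Bool) → ℝ) : Prop :=
  ∀ x y : Fin n → Bool,
    f x + f y ≤ f (fun i => x i && y i) + f (fun i => x i || y i)

/-- Discrete derivative `∂_i f (x) = f(x^{(i→1)}) - f(x^{(i→0)})`. -/
noncomputable def pD (n : ℕ) (i : Fin n) (f : (Fin n → Bool) → ℝ) :
    (Fin n → Bool) → ℝ :=
  fun x => f (Function.update x i true) - f (Function.update x i false)

/-- Character `χ_S(x) = (-1)^{∑_{i ∈ S} x_i}`. -/
noncomputable def chi (n : ℕ) (S : Finset (Fin n)) (x : Fin n → Bool) : ℝ :=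
  ∏ i ∈ S, (if x i then (-1 : ℝ) else 1)

/-- Fourier--Walsh coefficient `f̂(S) = E[f · χ_S]`. -/
noncomputable def fhat (n : ℕ) (f : (Fin n → Bool) → ℝ) (S : Finset (Fin n)) : ℝ :=
  Ev n (fun x => f x * chi n S x)

/-- Heat semigroup `P_t f = ∑_S e^{-t|S|} f̂(S) χ_S`. -/
noncomputable def heat (n : ℕ) (t : ℝ) (f : (Fin n → Bool) → ℝ) :
    (Fin n → Bool) → ℝ :=
  fun x => ∑ S : Finset (Fin n), Real.exp (-(t * S.card)) * fhat n f S * chi n S x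

/-- Influence of coordinate `i` on a Boolean (`{0,1}`-valued) function:
`Inf_i[f] = P[f(x) ≠ f(x ⊕ e_i)]`. -/
noncomputable def InfB (n : ℕ) (i : Fin n) (f : (Fin n → Bool) → ℝ) : ℝ :=
  Ev n (fun x => if f x = f (Function.update x i (! x i)) then 0 else 1)

/-- `L¹`-influence `Inf_i^{(1)}[f] = E[|∂_i f|]`. -/
noncomputable def Inf1 (n : ℕ) (i : Fin n) (f : (Fin n → Bool) → ℝ) : ℝ :=
  Ev n (fun x => |pD n i f x|)

/-- `L²`-influence `Inf_i[f] = E[|∂_i f|²]` for real-valued `f`. -/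
noncomputable def Inf2 (n : ℕ) (i : Fin n) (f : (Fin n → Bool) → ℝ) : ℝ :=
  Ev n (fun x => |pD n i f x| ^ 2)

/-- Difference operator `D_i f (x) = f(x) - f(x ⊕ e_i)`. -/
noncomputable def Dop (n : ℕ) (i : Fin n) (f : (Fin n → Bool) → ℝ) :
    (Fin n → Bool) → ℝ :=
  fun x => f x - f (Function.update x i (! x i))

/-- `‖f‖_p = (E[|f|^p])^{1/p}` (also used as a quasi-norm for `0 < p < 1`). -/
noncomputable def nrm (n : ℕ) (p : ℝ) (f : (Fin n → Bool) → ℝ) : ℝ :=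
  (Ev n (fun x => |f x| ^ p)) ^ (1 / p)

/-- Iterated discrete derivative along a list of coordinates. -/
noncomputable def pDList (n : ℕ) : List (Fin n) → ((Fin n → Bool) → ℝ) → ((Fin n → Bool) → ℝ)
  | [], f => f
  | i :: l, f => pD n i (pDList n l f)

/-- `∂_T f = ∂_{i₁} ∘ ⋯ ∘ ∂_{i_d} f` for `T = {i₁ < ⋯ < i_d}` (the order is immaterial
since discrete derivatives along distinct coordinates commute). -/
noncomputable def pDT (n : ℕ) (T : Finset (Fin n)) (f : (Fin n → Bool) → ℝ) :
    (Fin n → Bool) → ℝ :=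
  pDList n (T.sort (· ≤ ·)) f

lemma Ev_sum {n : ℕ} {α : Type*} (A : Finset α) (h : α → (Fin n → Bool) → ℝ) :
    Ev n (fun x => ∑ a ∈ A, h a x) = ∑ a ∈ A, Ev n (h a) := by
  unfold Ev; rw [Finset.sum_comm, Finset.sum_div]

lemma Ev_const_mul {n : ℕ} (c : ℝ) (f : (Fin n → Bool) → ℝ) :
    Ev n (fun x => c * f x) = c * Ev n f := by
  simp [Ev, ← Finset.mul_sum, mul_div_assoc]

lemma Ev_sub {n : ℕ} (f g : (Fin n → Bool) → ℝ) :
    Ev n (fun x => f x - g x) = Ev n f - Ev n g := by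
  simp [Ev, Finset.sum_sub_distrib, sub_div]

noncomputable def flipE (n : ℕ) (i : Fin n) : (Fin n → Bool) ≃ (Fin n → Bool) where
  toFun x := Function.update x i (!x i)
  invFun x := Function.update x i (!x i)
  left_inv x := by
    funext j
    rcases eq_or_ne j i with h | h
    · subst h; simp [Function.update]
    · simp [Function.update, h]
  right_inv x := by
    funext j
    rcases eq_or_ne j i with h | h
    · subst h; simp [Function.update]
    · simp [Function.update, h]

lemma Ev_flip {n : ℕ} (i : Fin n) (F : (Fin n → Bool) → ℝ) :
    Ev n (fun x => F (Function.update x i (!x i))) = Ev n F := by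
  unfold Ev
  congr 1
  exact Equiv.sum_comp (flipE n i) F

lemma chi_update (n : ℕ) (S : Finset (Fin n)) (i : Fin n) (x : Fin n → Bool) :
    chi n S (Function.update x i (!x i)) = (if i ∈ S then (-1:ℝ) else 1) * chi n S x := by
  by_cases hi : i ∈ S
  · simp only [hi, if_true, chi]
    rw [← Finset.mul_prod_erase S _ hi,
      ← Finset.mul_prod_erase S (fun j => if x j then (-1:ℝ) else 1) hi]
    have h1 : ∏ j ∈ S.erase i, (if Function.update x i (!x i) j then (-1:ℝ) else 1)
        = ∏ j ∈ S.erase i, (if x j then (-1:ℝ) else 1) := by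
      apply Finset.prod_congr rfl
      intro j hj
      rw [Function.update_of_ne (Finset.ne_of_mem_erase hj)]
    rw [h1, Function.update_self]
    cases hx : x i <;> simp <;> ring
  · simp only [hi, if_false, one_mul, chi]
    apply Finset.prod_congr rfl
    intro j hj
    have : j ≠ i := by rintro rfl; exact hi hj
    rw [Function.update_of_ne this]

lemma fhat_Dop (n : ℕ) (i : Fin n) (f : (Fin n → Bool) → ℝ) (S : Finset (Fin n)) :
    fhat n (Dop n i f) S = if i ∈ S then 2 * fhat n f S else 0 := by
  have hflip : Ev n (fun x => f (Function.update x i (!x i)) * chi n S (Function.update x i (!x i)))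
      = fhat n f S := by
    have := Ev_flip (n := n) i (fun y => f y * chi n S y)
    exact this
  have key : fhat n (Dop n i f) S
      = fhat n f S - (if i ∈ S then (-1:ℝ) else 1) * fhat n f S := by
    unfold fhat Dop
    rw [show (fun x => (f x - f (Function.update x i (!x i))) * chi n S x)
        = fun x => f x * chi n S x - f (Function.update x i (!x i)) * chi n S x from by
      funext x; ring]
    rw [Ev_sub]
    congr 1
    rw [show (fun x => f (Function.update x i (!x i)) * chi n S x)
        = fun x => (if i ∈ S then (-1:ℝ) else 1) *
          (f (Function.update x i (!x i)) * chi n S (Function.update x i (!x i))) from by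
      funext x
      rw [chi_update]
      by_cases hi : i ∈ S <;> simp [hi] <;> ring]
    rw [Ev_const_mul, hflip]
    rfl
  rw [key]
  by_cases hi : i ∈ S <;> simp [hi] <;> ring

lemma Ev_mul_heat (n : ℕ) (t : ℝ) (F G : (Fin n → Bool) → ℝ) :
    Ev n (fun x => F x * heat n t G x)
      = ∑ S : Finset (Fin n), Real.exp (-(t * S.card)) * (fhat n F S * fhat n G S) := by
  have hx : (fun x => F x * heat n t G x)
      = fun x => ∑ S : Finset (Fin n),
          (Real.exp (-(t * S.card)) * fhat n G S) * (F x * chi n S x) := by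
    funext x
    rw [heat, Finset.mul_sum]
    apply Finset.sum_congr rfl
    intros; ring
  rw [hx, Ev_sum]
  apply Finset.sum_congr rfl
  intro S _
  rw [Ev_const_mul]
  rw [show Ev n (fun x => F x * chi n S x) = fhat n F S from rfl]
  ring

lemma integral_exp_neg_mul' {b : ℝ} (hb : 0 < b) :
    ∫ t in Set.Ioi (0:ℝ), Real.exp (-(b * t)) = 1 / b := by
  have h := integral_comp_mul_left_Ioi (fun y => Real.exp (-y)) 0 hb
  simp only [mul_zero] at h
  rw [show (fun t => Real.exp (-(b * t))) = fun t => Real.exp (-(b * t)) from rfl]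
  rw [h, integral_exp_neg_Ioi, neg_zero, Real.exp_zero, smul_eq_mul, mul_one, one_div]

lemma kernel_eq (k : ℕ) :
    (fun t : ℝ => (Real.exp t - 1) * Real.exp (-(t * k)))
      = fun t : ℝ => Real.exp (-((k:ℝ) - 1) * t) - Real.exp (-(k:ℝ) * t) := by
  funext t
  rw [sub_mul, one_mul, ← Real.exp_add]
  have e1 : t + -(t * (k:ℝ)) = -((k:ℝ) - 1) * t := by ring
  have e2 : -(t * (k:ℝ)) = -(k:ℝ) * t := by ring
  rw [e1, e2]

lemma integrable_kernel (k : ℕ) (hk : 2 ≤ k) :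
    IntegrableOn (fun t : ℝ => (Real.exp t - 1) * Real.exp (-(t * k))) (Set.Ioi 0) := by
  have hk2 : (2:ℝ) ≤ (k:ℝ) := by exact_mod_cast hk
  have h1 : (0:ℝ) < (k:ℝ) - 1 := by linarith
  have h2 : (0:ℝ) < (k:ℝ) := by linarith
  rw [kernel_eq]
  exact (exp_neg_integrableOn_Ioi 0 h1).sub (exp_neg_integrableOn_Ioi 0 h2)

lemma integral_kernel (k : ℕ) (hk : 2 ≤ k) :
    ∫ t in Set.Ioi (0:ℝ), (Real.exp t - 1) * Real.exp (-(t * k))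
      = 1 / ((k:ℝ) - 1) - 1 / (k:ℝ) := by
  have hk2 : (2:ℝ) ≤ (k:ℝ) := by exact_mod_cast hk
  have h1 : (0:ℝ) < (k:ℝ) - 1 := by linarith
  have h2 : (0:ℝ) < (k:ℝ) := by linarith
  rw [kernel_eq]
  rw [integral_sub (exp_neg_integrableOn_Ioi 0 h1) (exp_neg_integrableOn_Ioi 0 h2)]
  have i1 : ∫ t in Set.Ioi (0:ℝ), Real.exp (-((k:ℝ) - 1) * t) = 1 / ((k:ℝ) - 1) := by
    rw [show (fun t : ℝ => Real.exp (-((k:ℝ) - 1) * t)) = fun t : ℝ => Real.exp (-(((k:ℝ) - 1) * t)) from by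
      funext t; rw [neg_mul]]
    exact integral_exp_neg_mul' h1
  have i2 : ∫ t in Set.Ioi (0:ℝ), Real.exp (-(k:ℝ) * t) = 1 / (k:ℝ) := by
    rw [show (fun t : ℝ => Real.exp (-(k:ℝ) * t)) = fun t : ℝ => Real.exp (-((k:ℝ) * t)) from by
      funext t; rw [neg_mul]]
    exact integral_exp_neg_mul' h2
  rw [i1, i2]

lemma fhat_Dij (n : ℕ) (f g : (Fin n → Bool) → ℝ) (i j : Fin n) (S : Finset (Fin n)) :
    fhat n (Dop n i (Dop n j f)) S * fhat n (Dop n i (Dop n j g)) S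
      = if i ∈ S ∧ j ∈ S then 16 * (fhat n f S * fhat n g S) else 0 := by
  rw [fhat_Dop, fhat_Dop]
  by_cases hi : i ∈ S <;> by_cases hj : j ∈ S <;>
    simp [hi, hj, fhat_Dop] <;> ring

lemma pair_integral (n : ℕ) (f g : (Fin n → Bool) → ℝ) (i j : Fin n) (hij : i < j) :
    (∫ t in Set.Ioi (0:ℝ), (Real.exp t - 1) *
        Ev n (fun x => Dop n i (Dop n j f) x * heat n t (Dop n i (Dop n j g)) x))
    = ∑ S : Finset (Fin n),
        (if i ∈ S ∧ j ∈ S then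
          (16 * (fhat n f S * fhat n g S)) * (1 / ((S.card:ℝ) - 1) - 1 / (S.card:ℝ))
        else 0) := by
  have hcard : ∀ S : Finset (Fin n), i ∈ S → j ∈ S → 2 ≤ S.card := by
    intro S hi hj
    exact Finset.one_lt_card.mpr ⟨i, hi, j, hj, hij.ne⟩
  have hint : (fun t : ℝ => (Real.exp t - 1) *
        Ev n (fun x => Dop n i (Dop n j f) x * heat n t (Dop n i (Dop n j g)) x))
      = fun t : ℝ => ∑ S : Finset (Fin n),
          (if i ∈ S ∧ j ∈ S then 16 * (fhat n f S * fhat n g S) else 0) *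
            ((Real.exp t - 1) * Real.exp (-(t * S.card))) := by
    funext t
    rw [Ev_mul_heat, Finset.mul_sum]
    apply Finset.sum_congr rfl
    intro S _
    rw [fhat_Dij]
    ring
  rw [hint, MeasureTheory.integral_finset_sum]
  · apply Finset.sum_congr rfl
    intro S _
    by_cases h : i ∈ S ∧ j ∈ S
    · simp only [h, and_self, if_true]
      rw [MeasureTheory.integral_const_mul, integral_kernel S.card (hcard S h.1 h.2)]
    · simp [h]
  · intro S _
    by_cases h : i ∈ S ∧ j ∈ S
    · simp only [h, and_self, if_true]
      exact (integrable_kernel S.card (hcard S h.1 h.2)).const_mul _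
    · simp only [h, if_false, zero_mul]
      exact integrable_zero _ _ _

lemma count_pairs (n : ℕ) (S : Finset (Fin n)) (c : ℝ) :
    2 * (∑ i : Fin n, ∑ j ∈ Finset.univ.filter (fun j : Fin n => i < j),
        (if i ∈ S ∧ j ∈ S then c else 0))
      = (S.card : ℝ) * ((S.card : ℝ) - 1) * c := by
  have hA : (∑ i : Fin n, ∑ j ∈ Finset.univ.filter (fun j : Fin n => i < j),
        (if i ∈ S ∧ j ∈ S then c else 0))
      = ∑ i : Fin n, ∑ j : Fin n, (if i < j ∧ (i ∈ S ∧ j ∈ S) then c else 0) := by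
    apply Finset.sum_congr rfl
    intro i _
    rw [Finset.sum_filter]
    apply Finset.sum_congr rfl
    intro j _
    rw [← ite_and]
  have hA' : (∑ i : Fin n, ∑ j : Fin n, (if i < j ∧ (i ∈ S ∧ j ∈ S) then c else 0))
      = ∑ i : Fin n, ∑ j : Fin n, (if j < i ∧ (i ∈ S ∧ j ∈ S) then c else 0) := by
    rw [Finset.sum_comm]
    apply Finset.sum_congr rfl
    intro i _
    apply Finset.sum_congr rfl
    intro j _
    exact if_congr (by tauto) rfl rfl
  have hsum : (∑ i : Fin n, ∑ j : Fin n, (if i < j ∧ (i ∈ S ∧ j ∈ S) then c else 0))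
        + (∑ i : Fin n, ∑ j : Fin n, (if j < i ∧ (i ∈ S ∧ j ∈ S) then c else 0))
      = ∑ i : Fin n, ∑ j : Fin n, (if i ≠ j ∧ (i ∈ S ∧ j ∈ S) then c else 0) := by
    rw [← Finset.sum_add_distrib]
    apply Finset.sum_congr rfl
    intro i _
    rw [← Finset.sum_add_distrib]
    apply Finset.sum_congr rfl
    intro j _
    rcases lt_trichotomy i j with h | h | h
    · simp [h, h.ne, asymm h]
    · subst h; simp
    · simp [h, (h.ne).symm, asymm h]
  have hcount : (∑ i : Fin n, ∑ j : Fin n, (if i ≠ j ∧ (i ∈ S ∧ j ∈ S) then c else 0))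
      = (S.card : ℝ) * ((S.card : ℝ) - 1) * c := by
    have hinner : ∀ i : Fin n, (∑ j : Fin n, (if i ≠ j ∧ (i ∈ S ∧ j ∈ S) then c else 0))
        = if i ∈ S then ((S.card : ℝ) - 1) * c else 0 := by
      intro i
      by_cases hi : i ∈ S
      · rw [if_pos hi]
        have : ∀ j : Fin n, (if i ≠ j ∧ (i ∈ S ∧ j ∈ S) then c else 0)
            = if j ∈ S.erase i then c else 0 := by
          intro j
          apply if_congr _ rfl rfl
          rw [Finset.mem_erase]
          constructor
          · rintro ⟨h1, _, h2⟩; exact ⟨h1.symm, h2⟩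
          · rintro ⟨h1, h2⟩; exact ⟨h1.symm, hi, h2⟩
        rw [Fintype.sum_congr _ _ this]
        rw [Finset.sum_ite_mem, Finset.univ_inter, Finset.sum_const,
          Finset.card_erase_of_mem hi, nsmul_eq_mul]
        congr 1
        have h1 : 1 ≤ S.card := Finset.card_pos.mpr ⟨i, hi⟩
        push_cast [h1]
        ring
      · rw [if_neg hi]
        apply Finset.sum_eq_zero
        intro j _
        rw [if_neg]
        rintro ⟨-, h2, -⟩
        exact hi h2
    simp_rw [hinner]
    rw [Finset.sum_ite_mem, Finset.univ_inter, Finset.sum_const, nsmul_eq_mul]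
    ring
  rw [hA]
  nlinarith [hA', hsum, hcount]

/-- Heat-semigroup representation of the level-`≥ 2` Fourier weight
via the difference operators `D_{ij}`, with kernel `e^t − 1`. -/
theorem heat_semigroup_representation_D (n : ℕ) (f g : (Fin n → Bool) → ℝ) :
    ∑ S ∈ Finset.univ.filter (fun S : Finset (Fin n) => 2 ≤ S.card),
        fhat n f S * fhat n g S
    = (1 / 8) * ∑ i : Fin n, ∑ j ∈ Finset.univ.filter (fun j : Fin n => i < j),
        ∫ t in Set.Ioi (0 : ℝ), (Real.exp t - 1) *
          Ev n (fun x => Dop n i (Dop n j f) x * heat n t (Dop n i (Dop n j g)) x) := by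
  have step1 : ∀ i : Fin n,
      (∑ j ∈ Finset.univ.filter (fun j : Fin n => i < j),
        ∫ t in Set.Ioi (0 : ℝ), (Real.exp t - 1) *
          Ev n (fun x => Dop n i (Dop n j f) x * heat n t (Dop n i (Dop n j g)) x))
      = ∑ j ∈ Finset.univ.filter (fun j : Fin n => i < j), ∑ S : Finset (Fin n),
          (if i ∈ S ∧ j ∈ S then
            (16 * (fhat n f S * fhat n g S)) * (1 / ((S.card:ℝ) - 1) - 1 / (S.card:ℝ))
          else 0) := by
    intro i
    apply Finset.sum_congr rfl
    intro j hj
    exact pair_integral n f g i j (Finset.mem_filter.mp hj).2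
  rw [Finset.sum_congr rfl (fun i _ => step1 i)]
  rw [Finset.sum_congr rfl (fun i _ => Finset.sum_comm)]
  rw [Finset.sum_comm]
  rw [Finset.sum_filter, Finset.mul_sum]
  apply Finset.sum_congr rfl
  intro S _
  set P := fhat n f S * fhat n g S with hP
  set k : ℝ := (S.card : ℝ) with hk
  set T := ∑ i : Fin n, ∑ j ∈ Finset.univ.filter (fun j : Fin n => i < j),
      (if i ∈ S ∧ j ∈ S then (16 * P) * (1 / (k - 1) - 1 / k) else 0) with hT
  have hc := count_pairs n S ((16 * P) * (1 / (k - 1) - 1 / k))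
  rw [← hT] at hc
  by_cases hS : 2 ≤ S.card
  · rw [if_pos hS]
    have hk2 : (2:ℝ) ≤ k := by rw [hk]; exact_mod_cast hS
    have h1 : k - 1 ≠ 0 := by linarith
    have h2 : k ≠ 0 := by linarith
    have hI : k * (k - 1) * (1 / (k - 1) - 1 / k) = 1 := by
      field_simp
      ring
    have h16 : k * (k - 1) * ((16 * P) * (1 / (k - 1) - 1 / k)) = 16 * P := by
      rw [show k * (k - 1) * ((16 * P) * (1 / (k - 1) - 1 / k))
          = (16 * P) * (k * (k - 1) * (1 / (k - 1) - 1 / k)) from by ring, hI, mul_one]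
    linarith [hc, h16]
  · rw [if_neg hS]
    have h0 : k * (k - 1) = 0 := by
      have : S.card = 0 ∨ S.card = 1 := by omega
      rcases this with h | h <;> rw [hk, h] <;> norm_num
    rw [h0, zero_mul] at hc
    linarith
end

section
/- Let f, g : {0,1}^n → ℝ. Then |∑_{S ⊆ [n], |S| ≥ 2} f̂(S)·ĝ(S)| ≤ (9/8)·∑_{1 ≤ i < j ≤ n} (‖∂_{ij} f‖_2 · ‖∂_{ij} g‖_2) / (1 + log( (‖∂_{ij} f‖_2 · ‖∂_{ij} g‖_2) / (‖∂_{ij} f‖_1 · ‖∂_{ij} g‖_1) )), where terms with ∂_{ij} f ≡ 0 or ∂_{ij} g ≡ 0 are interpreted as zero. -/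
open Finset MeasureTheory

section TalagrandProof

lemma tal_bern {a x : ℝ} (h0 : 0 ≤ a) (h1 : a ≤ 1) (hx : 0 ≤ x) :
    (1 + x) ^ a ≤ 1 + a * x := by
  have h := Real.geom_mean_le_arith_mean2_weighted h0 (by linarith : (0:ℝ) ≤ 1 - a)
    (by linarith : (0:ℝ) ≤ 1 + x) zero_le_one (by ring)
  rw [Real.one_rpow, mul_one] at h
  linarith

lemma tal_psi {p : ℝ} (hp : 1 < p) (hp2 : p ≤ 2) {t : ℝ} (ht0 : 0 ≤ t) (ht1 : t ≤ 1) :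
    1 + p * (p-1) * t^2 / 2 ≤ ((1+t) ^ p + (1-t) ^ p) / 2 := by
  have hp0 : (0:ℝ) < p := by linarith
  set F : ℝ → ℝ := fun s => ((1+s) ^ p + (1-s) ^ p) / 2 - 1 - p*(p-1)/2*s^2 with hF
  set F' : ℝ → ℝ := fun s => (p*(1+s) ^ (p-1) - p*(1-s) ^ (p-1)) / 2 - p*(p-1)*s with hF'
  have hcont1 : ContinuousOn (fun s : ℝ => (1+s) ^ p) (Set.Icc 0 1) := by
    apply ContinuousOn.rpow_const (by fun_prop)
    intro x hx; exact Or.inr (le_of_lt hp0)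
  have hcont2 : ContinuousOn (fun s : ℝ => (1-s) ^ p) (Set.Icc 0 1) := by
    apply ContinuousOn.rpow_const (by fun_prop)
    intro x hx; exact Or.inr (le_of_lt hp0)
  have hcont1' : ContinuousOn (fun s : ℝ => p * (1+s) ^ (p-1)) (Set.Icc 0 1) := by
    apply ContinuousOn.mul continuousOn_const
    apply ContinuousOn.rpow_const (by fun_prop)
    intro x hx; exact Or.inr (by linarith)
  have hcont2' : ContinuousOn (fun s : ℝ => p * (1-s) ^ (p-1)) (Set.Icc 0 1) := by
    apply ContinuousOn.mul continuousOn_const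
    apply ContinuousOn.rpow_const (by fun_prop)
    intro x hx; exact Or.inr (by linarith)
  have hFc : ContinuousOn F (Set.Icc 0 1) := by
    apply ContinuousOn.sub; apply ContinuousOn.sub
    · exact (hcont1.add hcont2).div_const 2
    · exact continuousOn_const
    · fun_prop
  have hF'c : ContinuousOn F' (Set.Icc 0 1) := by
    apply ContinuousOn.sub
    · exact (hcont1'.sub hcont2').div_const 2
    · fun_prop
  have hd : ∀ t ∈ Set.Ioo (0:ℝ) 1, HasDerivAt F (F' t) t := by
    intro t ht
    have h1t : (0:ℝ) < 1 + t := by linarith [ht.1]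
    have h2t : (0:ℝ) < 1 - t := by linarith [ht.2]
    have h1 : HasDerivAt (fun s:ℝ => (1+s)^p) (1 * p * (1+t)^(p-1)) t :=
      HasDerivAt.rpow_const ((hasDerivAt_id t).const_add 1) (Or.inl (ne_of_gt h1t))
    have h2 : HasDerivAt (fun s:ℝ => (1-s)^p) ((-1) * p * (1-t)^(p-1)) t :=
      HasDerivAt.rpow_const ((hasDerivAt_id t).const_sub 1) (Or.inl (ne_of_gt h2t))
    have h3 : HasDerivAt (fun s:ℝ => p*(p-1)/2*s^2) (p*(p-1)/2*(2*t)) t := by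
      have := (hasDerivAt_pow 2 t).const_mul (p*(p-1)/2)
      simpa using this
    have := (((h1.add h2).div_const 2).sub_const 1).sub h3
    refine this.congr_deriv ?_
    simp only [hF']; ring
  have hd' : ∀ t ∈ Set.Ioo (0:ℝ) 1,
      HasDerivAt F' ((p*(p-1)*(1+t)^(p-2) + p*(p-1)*(1-t)^(p-2))/2 - p*(p-1)) t := by
    intro t ht
    have h1t : (0:ℝ) < 1 + t := by linarith [ht.1]
    have h2t : (0:ℝ) < 1 - t := by linarith [ht.2]
    have h1 : HasDerivAt (fun s:ℝ => (1+s)^(p-1)) (1 * (p-1) * (1+t)^(p-1-1)) t :=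
      HasDerivAt.rpow_const ((hasDerivAt_id t).const_add 1) (Or.inl (ne_of_gt h1t))
    have h2 : HasDerivAt (fun s:ℝ => (1-s)^(p-1)) ((-1) * (p-1) * (1-t)^(p-1-1)) t :=
      HasDerivAt.rpow_const ((hasDerivAt_id t).const_sub 1) (Or.inl (ne_of_gt h2t))
    have h3 : HasDerivAt (fun s:ℝ => p*(p-1)*s) (p*(p-1)) t := by
      simpa using (hasDerivAt_id t).const_mul (p*(p-1))
    have := (((h1.const_mul p).sub (h2.const_mul p)).div_const 2).sub h3
    refine this.congr_deriv ?_
    have e1 : p - 1 - 1 = p - 2 := by ring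
    rw [e1]; ring
  -- F'' ≥ 0 on Ioo
  have hF''nonneg : ∀ t ∈ Set.Ioo (0:ℝ) 1,
      0 ≤ (p*(p-1)*(1+t)^(p-2) + p*(p-1)*(1-t)^(p-2))/2 - p*(p-1) := by
    intro t ht
    have h1t : (0:ℝ) < 1 + t := by linarith [ht.1]
    have h2t : (0:ℝ) < 1 - t := by linarith [ht.2]
    have hX : (0:ℝ) < (1+t)^(p-2) := Real.rpow_pos_of_pos h1t _
    have hY : (0:ℝ) < (1-t)^(p-2) := Real.rpow_pos_of_pos h2t _
    have hXY : (1:ℝ) ≤ (1+t)^(p-2) * (1-t)^(p-2) := by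
      rw [← Real.mul_rpow (le_of_lt h1t) (le_of_lt h2t)]
      apply Real.one_le_rpow_of_pos_of_le_one_of_nonpos
      · nlinarith [ht.1, ht.2]
      · nlinarith [ht.1, ht.2]
      · linarith
    have hsum : (2:ℝ) ≤ (1+t)^(p-2) + (1-t)^(p-2) := by
      nlinarith [sq_nonneg ((1+t)^(p-2) - (1-t)^(p-2))]
    have hpp : (0:ℝ) ≤ p*(p-1) := by nlinarith
    nlinarith
  -- F' is monotone on Icc 0 1
  have hF'mono : MonotoneOn F' (Set.Icc 0 1) := by
    apply monotoneOn_of_deriv_nonneg (convex_Icc 0 1) hF'c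
    · intro x hx
      rw [interior_Icc] at hx
      exact (hd' x hx).differentiableAt.differentiableWithinAt
    · intro x hx
      rw [interior_Icc] at hx
      rw [(hd' x hx).deriv]
      exact hF''nonneg x hx
  have hF'0 : F' 0 = 0 := by simp [hF']
  have hF'nonneg : ∀ x ∈ Set.Ioo (0:ℝ) 1, 0 ≤ F' x := by
    intro x hx
    rw [← hF'0]
    exact hF'mono (Set.mem_Icc.2 ⟨le_refl 0, zero_le_one⟩)
      (Set.mem_Icc.2 ⟨le_of_lt hx.1, le_of_lt hx.2⟩) (le_of_lt hx.1)
  have hFmono : MonotoneOn F (Set.Icc 0 1) := by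
    apply monotoneOn_of_deriv_nonneg (convex_Icc 0 1) hFc
    · intro x hx
      rw [interior_Icc] at hx
      exact (hd x hx).differentiableAt.differentiableWithinAt
    · intro x hx
      rw [interior_Icc] at hx
      rw [(hd x hx).deriv]
      exact hF'nonneg x hx
  have hF0 : F 0 = 0 := by simp [hF]
  have : 0 ≤ F t := by
    rw [← hF0]
    exact hFmono (Set.mem_Icc.2 ⟨le_refl 0, zero_le_one⟩) (Set.mem_Icc.2 ⟨ht0, ht1⟩) ht0
  simp only [hF] at this
  linarith


-- core: normalized two point
lemma tal_core {u t : ℝ} (hu0 : 0 ≤ u) (hu1 : u ≤ 1) (ht0 : 0 ≤ t) (ht1 : t ≤ 1) :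
    1 + u * t^2 ≤ (((1+t) ^ (1+u) + (1-t) ^ (1+u)) / 2) ^ (2/(1+u)) := by
  set p : ℝ := 1 + u with hp
  have hp1 : 1 ≤ p := by linarith
  have hp2 : p ≤ 2 := by linarith
  have hp0 : (0:ℝ) < p := by linarith
  have hmean_nonneg : 0 ≤ ((1+t)^p + (1-t)^p)/2 := by
    have := Real.rpow_nonneg (by linarith : (0:ℝ) ≤ 1+t) p
    have := Real.rpow_nonneg (by linarith : (0:ℝ) ≤ 1-t) p
    linarith
  have key : (1 + u*t^2) ^ (p/2) ≤ ((1+t)^p + (1-t)^p)/2 := by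
    rcases eq_or_lt_of_le hp1 with heq | hlt
    · have hu : u = 0 := by simp only [hp] at heq; linarith
      subst hu
      simp only [hp]
      norm_num
    · calc (1 + u*t^2) ^ (p/2) ≤ 1 + (p/2) * (u*t^2) := by
            apply tal_bern (by linarith) (by linarith) (by positivity)
      _ = 1 + p * (p-1) * t^2 / 2 := by rw [hp]; ring
      _ ≤ _ := tal_psi hlt hp2 ht0 ht1
  have h1 : (0:ℝ) ≤ 1 + u*t^2 := by positivity
  calc 1 + u*t^2 = ((1 + u*t^2) ^ (p/2)) ^ (2/p) := by
        rw [← Real.rpow_mul h1, show p/2*(2/p) = 1 by field_simp, Real.rpow_one]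
  _ ≤ _ := Real.rpow_le_rpow (Real.rpow_nonneg h1 _) key (by positivity)

lemma tal_two_point_le {u a b : ℝ} (hu0 : 0 ≤ u) (hu1 : u ≤ 1) (hb : 0 ≤ b) (hba : b ≤ a) :
    ((a+b)/2)^2 + u*((a-b)/2)^2 ≤ ((a ^ (1+u) + b ^ (1+u))/2) ^ (2/(1+u)) := by
  have ha : 0 ≤ a := le_trans hb hba
  have hp0 : (0:ℝ) < 1 + u := by linarith
  rcases eq_or_lt_of_le ha with h0 | hapos
  · -- a = 0 hence b = 0
    have hb0 : b = 0 := le_antisymm (h0 ▸ hba) hb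
    rw [← h0, hb0]
    norm_num
    rw [Real.zero_rpow (ne_of_gt hp0)]
    norm_num
    rw [Real.zero_rpow (by positivity)]
  · set m : ℝ := (a+b)/2 with hm
    have hmpos : 0 < m := by rw [hm]; linarith
    set t : ℝ := (a-b)/(a+b) with ht
    have habpos : 0 < a + b := by linarith
    have ht0 : 0 ≤ t := by apply div_nonneg <;> linarith
    have ht1 : t ≤ 1 := by rw [ht, div_le_one habpos]; linarith
    have hat : a = m * (1+t) := by rw [hm, ht]; field_simp; ring
    have hbt : b = m * (1-t) := by rw [hm, ht]; field_simp; ring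
    have hrw : ((a ^ (1+u) + b ^ (1+u))/2) ^ (2/(1+u))
        = m^2 * ((((1+t) ^ (1+u) + (1-t) ^ (1+u))) / 2) ^ (2/(1+u)) := by
      rw [hat, hbt]
      rw [Real.mul_rpow (le_of_lt hmpos) (by linarith),
          Real.mul_rpow (le_of_lt hmpos) (by linarith)]
      rw [← mul_add, mul_div_assoc]
      rw [Real.mul_rpow (Real.rpow_nonneg hmpos.le _) (by
        have h1 := Real.rpow_nonneg (by linarith : (0:ℝ) ≤ 1+t) (1+u)
        have h2 := Real.rpow_nonneg (by linarith : (0:ℝ) ≤ 1-t) (1+u)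
        positivity)]
      congr 1
      rw [← Real.rpow_natCast m 2, ← Real.rpow_mul (le_of_lt hmpos)]
      congr 1
      field_simp
      norm_num
    rw [hrw]
    have hlhs : ((a+b)/2)^2 + u*((a-b)/2)^2 = m^2 * (1 + u*t^2) := by
      have : (a-b)/2 = m * t := by rw [hm, ht]; field_simp
      rw [this, ← hm]; ring
    rw [hlhs]
    apply mul_le_mul_of_nonneg_left (tal_core hu0 hu1 ht0 ht1) (by positivity)

lemma tal_two_point {u a b : ℝ} (hu0 : 0 ≤ u) (hu1 : u ≤ 1) (ha : 0 ≤ a) (hb : 0 ≤ b) :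
    ((a+b)/2)^2 + u*((a-b)/2)^2 ≤ ((a ^ (1+u) + b ^ (1+u))/2) ^ (2/(1+u)) := by
  rcases le_total b a with h | h
  · exact tal_two_point_le hu0 hu1 hb h
  · have := tal_two_point_le hu0 hu1 ha h
    calc ((a+b)/2)^2 + u*((a-b)/2)^2 = ((b+a)/2)^2 + u*((b-a)/2)^2 := by ring
    _ ≤ ((b ^ (1+u) + a ^ (1+u))/2) ^ (2/(1+u)) := this
    _ = _ := by rw [add_comm]


def twt (u : ℝ) (a b : Bool) : ℝ := if a = b then 1+u else 1-u

noncomputable def Lam (n : ℕ) (u : ℝ) (f g : (Fin n → Bool) → ℝ) : ℝ :=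
  (∑ x : Fin n → Bool, ∑ y : Fin n → Bool,
    (∏ i, twt u (x i) (y i)) * (f x * g y)) / 4 ^ n

lemma twt_nonneg {u : ℝ} (hu0 : 0 ≤ u) (hu1 : u ≤ 1) (a b : Bool) : 0 ≤ twt u a b := by
  unfold twt; split <;> linarith

lemma Ev_nonneg {n : ℕ} {f : (Fin n → Bool) → ℝ} (h : ∀ x, 0 ≤ f x) : 0 ≤ Ev n f := by
  unfold Ev
  apply div_nonneg (Finset.sum_nonneg fun x _ => h x) (by positivity)

lemma Ev_abs_rpow_nonneg {n : ℕ} (p : ℝ) (f : (Fin n → Bool) → ℝ) :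
    0 ≤ Ev n (fun x => |f x| ^ p) :=
  Ev_nonneg fun x => Real.rpow_nonneg (abs_nonneg _) _

lemma nrm_nonneg {n : ℕ} (p : ℝ) (f : (Fin n → Bool) → ℝ) : 0 ≤ nrm n p f :=
  Real.rpow_nonneg (Ev_abs_rpow_nonneg p f) _

lemma nrm_rpow {n : ℕ} {p : ℝ} (hp : p ≠ 0) (f : (Fin n → Bool) → ℝ) :
    (nrm n p f) ^ p = Ev n (fun x => |f x| ^ p) := by
  unfold nrm
  rw [one_div, Real.rpow_inv_rpow (Ev_abs_rpow_nonneg p f) hp]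

lemma sum_succ {n : ℕ} (F : (Fin (n+1) → Bool) → ℝ) :
    ∑ x : Fin (n+1) → Bool, F x = ∑ b : Bool, ∑ x : Fin n → Bool, F (Fin.cons b x) := by
  rw [← Equiv.sum_comp (Fin.consEquiv (fun _ => Bool)) F]
  rw [Fintype.sum_prod_type]
  rfl

lemma Ev_succ {n : ℕ} (F : (Fin (n+1) → Bool) → ℝ) :
    Ev (n+1) F = (Ev n (fun x => F (Fin.cons false x)) + Ev n (fun x => F (Fin.cons true x))) / 2 := by
  unfold Ev
  rw [sum_succ F]
  simp only [Fintype.sum_bool]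
  rw [pow_succ]
  field_simp
  ring

lemma Lam_succ {n : ℕ} (u : ℝ) (f g : (Fin (n+1) → Bool) → ℝ) :
    Lam (n+1) u f g = (∑ b : Bool, ∑ b' : Bool, twt u b b' *
      Lam n u (fun x => f (Fin.cons b x)) (fun y => g (Fin.cons b' y))) / 4 := by
  unfold Lam
  rw [sum_succ (fun x => ∑ y : Fin (n+1) → Bool, (∏ i, twt u (x i) (y i)) * (f x * g y))]
  have h1 : ∀ b : Bool, ∀ x : Fin n → Bool,
      (∑ y : Fin (n+1) → Bool, (∏ i, twt u ((Fin.cons b x : Fin (n+1) → Bool) i) (y i)) * (f (Fin.cons b x) * g y))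
      = ∑ b' : Bool, ∑ y : Fin n → Bool, twt u b b' *
          ((∏ i, twt u (x i) (y i)) * (f (Fin.cons b x) * g (Fin.cons b' y))) := by
    intro b x
    rw [sum_succ]
    congr 1; funext b'; congr 1; funext y
    rw [Fin.prod_univ_succ]
    simp only [Fin.cons_zero, Fin.cons_succ]
    ring
  rw [Finset.sum_congr rfl fun b _ => Finset.sum_congr rfl fun x _ => h1 b x]
  rw [show (4:ℝ)^(n+1) = 4^n * 4 by ring]
  rw [Finset.sum_congr rfl fun b (_ : b ∈ (Finset.univ : Finset Bool)) => Finset.sum_comm]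
  have rhs1 : ∀ b b' : Bool,
      twt u b b' * ((∑ x : Fin n → Bool, ∑ y : Fin n → Bool,
        (∏ i, twt u (x i) (y i)) * (f (Fin.cons b x) * g (Fin.cons b' y))) / 4 ^ n)
      = (∑ x : Fin n → Bool, ∑ y : Fin n → Bool,
          twt u b b' * ((∏ i, twt u (x i) (y i)) * (f (Fin.cons b x) * g (Fin.cons b' y)))) / 4^n := by
    intro b b'
    rw [← mul_div_assoc]
    congr 1
    rw [Finset.mul_sum]
    exact Finset.sum_congr rfl fun x _ => Finset.mul_sum _ _ _
  rw [Finset.sum_congr rfl fun b (_ : b ∈ (Finset.univ : Finset Bool)) =>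
    Finset.sum_congr rfl fun b' _ => rhs1 b b']
  rw [Finset.sum_congr rfl fun b (_ : b ∈ (Finset.univ : Finset Bool)) =>
    (Finset.sum_div Finset.univ _ ((4:ℝ)^n)).symm]
  rw [← Finset.sum_div, div_div]

lemma tal_hyper (n : ℕ) {u : ℝ} (hu0 : 0 ≤ u) (hu1 : u ≤ 1)
    (f g : (Fin n → Bool) → ℝ) :
    |Lam n u f g| ≤ nrm n (1+u) f * nrm n (1+u) g := by
  have hp0 : (0:ℝ) < 1 + u := by linarith
  induction n with
  | zero =>
    unfold Lam nrm Ev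
    simp only [pow_zero, div_one]
    rw [Fintype.sum_unique, Fintype.sum_unique, Fintype.sum_unique, Fintype.sum_unique]
    simp only [Finset.univ_eq_empty, Finset.prod_empty, one_mul]
    rw [abs_mul]
    rw [one_div, Real.rpow_rpow_inv (by positivity) (ne_of_gt hp0),
        Real.rpow_rpow_inv (by positivity) (ne_of_gt hp0)]
  | succ n ih =>
    set p : ℝ := 1 + u with hp
    set F : Bool → ℝ := fun b => nrm n p (fun x => f (Fin.cons b x)) with hF
    set G : Bool → ℝ := fun b => nrm n p (fun x => g (Fin.cons b x)) with hG
    have hFn : ∀ b, 0 ≤ F b := fun b => nrm_nonneg _ _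
    have hGn : ∀ b, 0 ≤ G b := fun b => nrm_nonneg _ _
    have step1 : |Lam (n+1) u f g| ≤
        (∑ b : Bool, ∑ b' : Bool, twt u b b' * (F b * G b')) / 4 := by
      rw [Lam_succ]
      rw [abs_div]
      rw [show |(4:ℝ)| = 4 by norm_num]
      apply div_le_div_of_nonneg_right ?_ (by norm_num)
      · calc |∑ b : Bool, ∑ b' : Bool, twt u b b' * Lam n u _ _|
            ≤ ∑ b : Bool, |∑ b' : Bool, twt u b b' * Lam n u _ _| :=
              Finset.abs_sum_le_sum_abs _ _
        _ ≤ ∑ b : Bool, ∑ b' : Bool, |twt u b b' * Lam n u _ _| :=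
              Finset.sum_le_sum fun b _ => Finset.abs_sum_le_sum_abs _ _
        _ ≤ ∑ b : Bool, ∑ b' : Bool, twt u b b' * (F b * G b') := by
              apply Finset.sum_le_sum; intro b _
              apply Finset.sum_le_sum; intro b' _
              rw [abs_mul, abs_of_nonneg (twt_nonneg hu0 hu1 b b')]
              exact mul_le_mul_of_nonneg_left (ih _ _) (twt_nonneg hu0 hu1 b b')
    set mF : ℝ := (F false + F true)/2 with hmF
    set dF : ℝ := (F false - F true)/2 with hdF
    set mG : ℝ := (G false + G true)/2 with hmG
    set dG : ℝ := (G false - G true)/2 with hdG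
    have hsum : (∑ b : Bool, ∑ b' : Bool, twt u b b' * (F b * G b')) / 4
        = mF * mG + u * (dF * dG) := by
      simp only [Fintype.sum_bool, twt]
      norm_num [hmF, hdF, hmG, hdG]
      ring
    have hpne : p ≠ 0 := ne_of_gt hp0
    have hXF : (0:ℝ) ≤ (F false ^ p + F true ^ p)/2 := by
      have h1 := Real.rpow_nonneg (hFn false) p
      have h2 := Real.rpow_nonneg (hFn true) p
      linarith
    have hXG : (0:ℝ) ≤ (G false ^ p + G true ^ p)/2 := by
      have h1 := Real.rpow_nonneg (hGn false) p
      have h2 := Real.rpow_nonneg (hGn true) p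
      linarith
    set RF : ℝ := ((F false ^ p + F true ^ p)/2) ^ (1/p) with hRF
    set RG : ℝ := ((G false ^ p + G true ^ p)/2) ^ (1/p) with hRG
    have hRFn : 0 ≤ RF := Real.rpow_nonneg hXF _
    have hRGn : 0 ≤ RG := Real.rpow_nonneg hXG _
    have hRF2 : RF^2 = ((F false ^ p + F true ^ p)/2) ^ (2/p) := by
      rw [hRF, ← Real.rpow_natCast (((F false ^ p + F true ^ p)/2) ^ (1/p)) 2,
        ← Real.rpow_mul hXF]
      congr 1
      push_cast
      ring
    have hRG2 : RG^2 = ((G false ^ p + G true ^ p)/2) ^ (2/p) := by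
      rw [hRG, ← Real.rpow_natCast (((G false ^ p + G true ^ p)/2) ^ (1/p)) 2,
        ← Real.rpow_mul hXG]
      congr 1
      push_cast
      ring
    have h2F : mF^2 + u*dF^2 ≤ RF^2 := by
      rw [hRF2, hmF, hdF, hp]
      exact tal_two_point hu0 hu1 (hFn false) (hFn true)
    have h2G : mG^2 + u*dG^2 ≤ RG^2 := by
      rw [hRG2, hmG, hdG, hp]
      exact tal_two_point hu0 hu1 (hGn false) (hGn true)
    have hnrmf : nrm (n+1) p f = RF := by
      unfold nrm
      rw [Ev_succ (fun x => |f x| ^ p)]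
      rw [hRF, ← nrm_rpow hpne (fun x => f (Fin.cons false x)),
        ← nrm_rpow hpne (fun x => f (Fin.cons true x))]
    have hnrmg : nrm (n+1) p g = RG := by
      unfold nrm
      rw [Ev_succ (fun x => |g x| ^ p)]
      rw [hRG, ← nrm_rpow hpne (fun x => g (Fin.cons false x)),
        ← nrm_rpow hpne (fun x => g (Fin.cons true x))]
    have hdFb : |dF| ≤ mF := by
      rw [abs_le, hdF, hmF]
      constructor <;> linarith [hFn false, hFn true]
    have hdGb : |dG| ≤ mG := by
      rw [abs_le, hdG, hmG]
      constructor <;> linarith [hGn false, hGn true]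
    have hmFn : 0 ≤ mF := le_trans (abs_nonneg dF) hdFb
    have hmGn : 0 ≤ mG := le_trans (abs_nonneg dG) hdGb
    set X : ℝ := mF * mG + u * (dF * dG) with hX
    clear_value X
    clear_value p F G mF dF mG dG RF RG
    have hXsq : X^2 ≤ (RF*RG)^2 := by
      have hm : (mF^2+u*dF^2) * (mG^2+u*dG^2) ≤ RF^2 * RG^2 :=
        mul_le_mul h2F h2G (by positivity) (sq_nonneg RF)
      have key : X^2 + u*(mF*dG - mG*dF)^2 = (mF^2+u*dF^2)*(mG^2+u*dG^2) := by
        rw [hX]; ring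
      have h3 := mul_nonneg hu0 (sq_nonneg (mF*dG - mG*dF))
      nlinarith [key, hm, h3]
    have hXle : X ≤ RF * RG := by
      calc X ≤ |X| := le_abs_self _
      _ = Real.sqrt (X^2) := (Real.sqrt_sq_eq_abs X).symm
      _ ≤ Real.sqrt ((RF*RG)^2) := Real.sqrt_le_sqrt hXsq
      _ = |RF*RG| := Real.sqrt_sq_eq_abs _
      _ = RF*RG := abs_of_nonneg (mul_nonneg hRFn hRGn)
    rw [hnrmf, hnrmg]
    calc |Lam (n+1) u f g| ≤ _ := step1
    _ = X := hsum
    _ ≤ RF * RG := hXle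


lemma prod_twt_eq (n : ℕ) (u : ℝ) (x y : Fin n → Bool) :
    (∏ i, twt u (x i) (y i)) =
      ∑ S : Finset (Fin n), u ^ S.card * (chi n S x * chi n S y) := by
  have point : ∀ a b : Bool, twt u a b =
      (u * ((if a then (-1:ℝ) else 1) * (if b then (-1:ℝ) else 1))) + 1 := by
    intro a b; cases a <;> cases b <;> simp [twt] <;> ring
  rw [Finset.prod_congr rfl fun i _ => point (x i) (y i)]
  rw [Finset.prod_add]
  rw [Finset.powerset_univ]
  apply Finset.sum_congr rfl; intro S _
  rw [Finset.prod_const_one, mul_one]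
  unfold chi
  rw [Finset.prod_mul_distrib, Finset.prod_mul_distrib, Finset.prod_const]

lemma Lam_fourier (n : ℕ) (u : ℝ) (f g : (Fin n → Bool) → ℝ) :
    Lam n u f g = ∑ S : Finset (Fin n), u ^ S.card * (fhat n f S * fhat n g S) := by
  unfold Lam
  have hnum : (∑ x : Fin n → Bool, ∑ y : Fin n → Bool,
        (∏ i, twt u (x i) (y i)) * (f x * g y))
      = ∑ S : Finset (Fin n), u ^ S.card *
          ((∑ x : Fin n → Bool, f x * chi n S x) * (∑ y : Fin n → Bool, g y * chi n S y)) := by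
    rw [Finset.sum_congr rfl fun x (_ : x ∈ Finset.univ) => Finset.sum_congr rfl fun y _ => by
      rw [prod_twt_eq n u x y, Finset.sum_mul]]
    rw [Finset.sum_congr rfl fun x (_ : x ∈ Finset.univ) => Finset.sum_comm]
    rw [Finset.sum_comm]
    apply Finset.sum_congr rfl; intro S _
    rw [Finset.sum_mul_sum, Finset.mul_sum]
    apply Finset.sum_congr rfl; intro x _
    rw [Finset.mul_sum]
    apply Finset.sum_congr rfl; intro y _
    ring
  rw [hnum, Finset.sum_div]
  apply Finset.sum_congr rfl; intro S _
  unfold fhat Ev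
  have h4 : (4:ℝ)^n = 2^n * 2^n := by rw [← mul_pow]; norm_num
  rw [h4]
  field_simp

lemma upd_invol {n : ℕ} (i : Fin n) :
    Function.Involutive (fun x : Fin n → Bool => Function.update x i (!x i)) := by
  intro x
  simp [Function.update_idem, Function.update_self]

lemma sum_invol {n : ℕ} (i : Fin n) (H : (Fin n → Bool) → ℝ) :
    ∑ x : Fin n → Bool, H (Function.update x i (!x i)) = ∑ x : Fin n → Bool, H x :=
  Equiv.sum_comp (Function.Involutive.toPerm _ (upd_invol i)) H

lemma sum_invol_zero {n : ℕ} (i : Fin n) (H : (Fin n → Bool) → ℝ)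
    (h : ∀ x, H (Function.update x i (!x i)) = - H x) :
    ∑ x : Fin n → Bool, H x = 0 := by
  have h1 := sum_invol i H
  have h2 : ∑ x : Fin n → Bool, H (Function.update x i (!x i)) = ∑ x : Fin n → Bool, - H x :=
    Finset.sum_congr rfl fun x _ => h x
  rw [h2, Finset.sum_neg_distrib] at h1
  linarith

lemma chi_update_s9 {n : ℕ} {i : Fin n} {T : Finset (Fin n)} (h : i ∉ T)
    (x : Fin n → Bool) (b : Bool) : chi n T (Function.update x i b) = chi n T x := by
  unfold chi
  apply Finset.prod_congr rfl
  intro j hj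
  have hji : j ≠ i := fun e => h (e ▸ hj)
  rw [Function.update_of_ne hji b x]

lemma chi_insert {n : ℕ} {i : Fin n} {T : Finset (Fin n)} (h : i ∉ T) (x : Fin n → Bool) :
    chi n (insert i T) x = (if x i then (-1:ℝ) else 1) * chi n T x :=
  Finset.prod_insert h

lemma fhat_pD {n : ℕ} (i : Fin n) (f : (Fin n → Bool) → ℝ) (T : Finset (Fin n)) :
    fhat n (pD n i f) T = if i ∈ T then 0 else -2 * fhat n f (insert i T) := by
  by_cases hiT : i ∈ T
  · rw [if_pos hiT]
    unfold fhat Ev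
    rw [div_eq_iff (by positivity : ((2:ℝ)^n) ≠ 0), zero_mul]
    have hchi : ∀ x : Fin n → Bool, chi n T x =
        (if x i then (-1:ℝ) else 1) * chi n (T.erase i) x := by
      intro x
      rw [← chi_insert (Finset.notMem_erase i T) x, Finset.insert_erase hiT]
    apply sum_invol_zero i
    intro x
    rw [hchi, hchi]
    have e1 : Function.update x i (!x i) i = !x i := Function.update_self i (!x i) x
    rw [e1]
    rw [chi_update_s9 (Finset.notMem_erase i T)]
    unfold pD
    rw [Function.update_idem, Function.update_idem]
    cases h : x i <;> simp [h] <;> ring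
  · rw [if_neg hiT]
    unfold fhat Ev
    have point : ∀ x : Fin n → Bool, pD n i f x * chi n T x
        = -(f x * chi n (insert i T) x)
          - (f (Function.update x i (!x i)) * chi n (insert i T) (Function.update x i (!x i))) := by
      intro x
      rw [chi_insert hiT, chi_insert hiT, chi_update_s9 hiT, Function.update_self]
      unfold pD
      cases h : x i
      · have e0 : Function.update x i false = x := by
          rw [← h]; exact Function.update_eq_self i x
        rw [e0]
        norm_num [h]
        ring
      · have e1 : Function.update x i true = x := by
          rw [← h]; exact Function.update_eq_self i x
        rw [e1]
        norm_num [h]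
        ring
    have key : ∑ x : Fin n → Bool, pD n i f x * chi n T x
        = -2 * ∑ x : Fin n → Bool, f x * chi n (insert i T) x := by
      rw [Finset.sum_congr rfl fun x _ => point x]
      rw [Finset.sum_sub_distrib, Finset.sum_neg_distrib]
      rw [sum_invol i (fun x => f x * chi n (insert i T) x)]
      ring
    show (∑ x : Fin n → Bool, pD n i f x * chi n T x) / 2 ^ n
        = -2 * ((∑ x : Fin n → Bool, f x * chi n (insert i T) x) / 2 ^ n)
    rw [key]
    ring


lemma Ev_nonneg' {n : ℕ} {f : (Fin n → Bool) → ℝ} (h : ∀ x, 0 ≤ f x) : 0 ≤ Ev n f := by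
  unfold Ev
  apply div_nonneg (Finset.sum_nonneg fun x _ => h x) (by positivity)

lemma nrm_one {n : ℕ} (h : (Fin n → Bool) → ℝ) :
    nrm n 1 h = Ev n (fun x => |h x|) := by
  unfold nrm
  simp [Real.rpow_one]

lemma nrm_two_sq {n : ℕ} (h : (Fin n → Bool) → ℝ) :
    (nrm n 2 h)^2 = Ev n (fun x => |h x| ^ (2:ℝ)) := by
  unfold nrm
  rw [← Real.rpow_natCast ((Ev n fun x => |h x| ^ (2:ℝ)) ^ (1/(2:ℝ))) 2, ← Real.rpow_mul]
  · norm_num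
  · apply Ev_nonneg'
    intro x
    positivity

lemma nrm_one_le_nrm_two {n : ℕ} (h : (Fin n → Bool) → ℝ) :
    nrm n 1 h ≤ nrm n 2 h := by
  have hCS := Finset.sum_mul_sq_le_sq_mul_sq (Finset.univ : Finset (Fin n → Bool))
    (fun x => |h x|) (fun _ => (1:ℝ))
  simp only [mul_one, one_pow, Finset.sum_const, Finset.card_univ, nsmul_eq_mul] at hCS
  have hcard : (Fintype.card (Fin n → Bool)) = 2^n := by
    simp [Fintype.card_fun]
  rw [hcard] at hCS
  -- hCS : (∑ |h|)^2 ≤ (∑ |h|^2) * 2^n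
  have h2 : nrm n 1 h ^ 2 ≤ nrm n 2 h ^ 2 := by
    rw [nrm_one, nrm_two_sq]
    unfold Ev
    rw [div_pow]
    rw [div_le_div_iff₀ (by positivity) (by positivity)]
    have e2 : ∀ x : Fin n → Bool, |h x| ^ (2:ℝ) = |h x|^(2:ℕ) := fun x =>
      Real.rpow_natCast _ 2
    rw [Finset.sum_congr rfl fun x _ => e2 x]
    push_cast at hCS ⊢
    calc (∑ x : Fin n → Bool, |h x|)^2 * (2:ℝ)^n
        ≤ ((∑ x : Fin n → Bool, |h x|^2) * 2^n) * 2^n :=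
          mul_le_mul_of_nonneg_right hCS (by positivity)
    _ = (∑ x : Fin n → Bool, |h x|^2) * ((2:ℝ)^n)^2 := by ring
  have h1n : 0 ≤ nrm n 1 h := Real.rpow_nonneg (Ev_nonneg' fun x => Real.rpow_nonneg (abs_nonneg _) _) _
  have h2n : 0 ≤ nrm n 2 h := Real.rpow_nonneg (Ev_nonneg' fun x => Real.rpow_nonneg (abs_nonneg _) _) _
  nlinarith [h2]

lemma nrm_two_eq_zero {n : ℕ} {h : (Fin n → Bool) → ℝ} (hz : nrm n 2 h = 0) :
    ∀ x, h x = 0 := by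
  intro x
  have h2 : (nrm n 2 h)^2 = 0 := by rw [hz]; ring
  rw [nrm_two_sq] at h2
  unfold Ev at h2
  rw [div_eq_zero_iff] at h2
  rcases h2 with h2 | h2
  · have := (Finset.sum_eq_zero_iff_of_nonneg (fun y (_ : y ∈ Finset.univ) =>
      Real.rpow_nonneg (abs_nonneg (h y)) 2)).1 h2 x (Finset.mem_univ x)
    have hx : |h x| ^ (2:ℝ) = 0 := this
    have := (Real.rpow_eq_zero (abs_nonneg _) (by norm_num)).1 hx
    exact abs_eq_zero.1 this
  · exact absurd h2 (by positivity)

lemma interp {n : ℕ} {u : ℝ} (hu0 : 0 < u) (hu1 : u < 1) (h : (Fin n → Bool) → ℝ) :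
    Ev n (fun x => |h x| ^ (1+u)) ≤
      (Ev n (fun x => |h x|)) ^ (1-u) * (Ev n (fun x => |h x| ^ (2:ℝ))) ^ u := by
  set v : ℝ := ((2:ℝ)^n)⁻¹ with hv
  have hvpos : 0 < v := by positivity
  have h1u : (0:ℝ) < 1 - u := by linarith
  have hconj : ((1-u)⁻¹ : ℝ).HolderConjugate u⁻¹ := by
    rw [Real.holderConjugate_iff]
    constructor
    · rw [one_lt_inv_iff₀]
      constructor <;> linarith
    · rw [inv_inv, inv_inv]
      ring
  have hEv : ∀ G : (Fin n → Bool) → ℝ, Ev n G = ∑ x : Fin n → Bool, G x * v := by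
    intro G
    unfold Ev
    rw [div_eq_mul_inv, Finset.sum_mul]
  have hold := Real.inner_le_Lp_mul_Lq Finset.univ
    (fun x => (|h x| * v) ^ (1-u)) (fun x => (|h x| ^ (2:ℝ) * v) ^ u) hconj
  have hlhs : ∀ x : Fin n → Bool,
      (|h x| * v) ^ (1-u) * (|h x| ^ (2:ℝ) * v) ^ u = |h x| ^ (1+u) * v := by
    intro x
    rw [Real.mul_rpow (abs_nonneg _) hvpos.le,
        Real.mul_rpow (Real.rpow_nonneg (abs_nonneg _) _) hvpos.le,
        ← Real.rpow_mul (abs_nonneg _)]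
    calc |h x| ^ (1-u) * v ^ (1-u) * (|h x| ^ (2 * u) * v ^ u)
        = (|h x| ^ (1-u) * |h x| ^ (2 * u)) * (v ^ (1-u) * v ^ u) := by ring
    _ = |h x| ^ (1+u) * v := by
        rw [← Real.rpow_add' (abs_nonneg _) (by intro hc; nlinarith : (1-u) + 2*u ≠ 0),
            ← Real.rpow_add hvpos,
            show (1:ℝ) - u + 2*u = 1 + u by ring,
            show (1:ℝ) - u + u = 1 by ring, Real.rpow_one]
  have hfp : ∀ x : Fin n → Bool,
      |(|h x| * v) ^ (1-u)| ^ ((1-u)⁻¹) = |h x| * v := by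
    intro x
    rw [abs_of_nonneg (Real.rpow_nonneg (by positivity) _)]
    exact Real.rpow_rpow_inv (by positivity) (ne_of_gt h1u)
  have hgp : ∀ x : Fin n → Bool,
      |(|h x| ^ (2:ℝ) * v) ^ u| ^ (u⁻¹) = |h x| ^ (2:ℝ) * v := by
    intro x
    have hb : (0:ℝ) ≤ |h x| ^ (2:ℝ) * v :=
      mul_nonneg (Real.rpow_nonneg (abs_nonneg _) _) hvpos.le
    rw [abs_of_nonneg (Real.rpow_nonneg hb _)]
    exact Real.rpow_rpow_inv hb (ne_of_gt hu0)
  rw [Finset.sum_congr rfl (fun x _ => hlhs x),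
      Finset.sum_congr rfl (fun x _ => hfp x),
      Finset.sum_congr rfl (fun x _ => hgp x),
      one_div, inv_inv, one_div, inv_inv] at hold
  rw [hEv, hEv, hEv]
  exact hold


lemma weight_integral (m : ℕ) :
    ∫ u in (0:ℝ)..1, (1-u) * u^m = 1/(((m:ℝ)+1)*((m:ℝ)+2)) := by
  have h1 : ∀ u : ℝ, (1-u) * u^m = u^m - u^(m+1) := by intro u; ring
  rw [intervalIntegral.integral_congr (fun u _ => h1 u)]
  rw [intervalIntegral.integral_sub
    ((continuous_pow m).intervalIntegrable 0 1)
    ((continuous_pow (m+1)).intervalIntegrable 0 1)]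
  rw [integral_pow, integral_pow]
  push_cast
  rw [div_sub_div _ _ (by positivity) (by positivity)]
  norm_num
  left
  ring

lemma sum_to_integral {n : ℕ} (c : Finset (Fin n) → ℝ) :
    ∫ u in (0:ℝ)..1, ((1-u) * ∑ T : Finset (Fin n), u^T.card * c T)
      = ∑ T : Finset (Fin n), c T / (((T.card:ℝ)+1)*((T.card:ℝ)+2)) := by
  have h1 : ∀ u : ℝ, (1-u) * ∑ T : Finset (Fin n), u^T.card * c T
      = ∑ T : Finset (Fin n), ((1-u) * u^T.card) * c T := by
    intro u
    rw [Finset.mul_sum]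
    exact Finset.sum_congr rfl fun T _ => by ring
  rw [intervalIntegral.integral_congr (fun u _ => h1 u)]
  rw [intervalIntegral.integral_finset_sum]
  · apply Finset.sum_congr rfl
    intro T _
    rw [intervalIntegral.integral_mul_const, weight_integral]
    ring
  · intro T _
    apply Continuous.intervalIntegrable
    continuity


lemma cast_choose_two (m : ℕ) : ((m.choose 2 : ℕ) : ℝ) = (m:ℝ)*((m:ℝ)-1)/2 := by
  rw [Nat.choose_two_right]
  match m with
  | 0 => norm_num
  | (k+1) =>
    have hdvd : 2 ∣ (k+1)*k := by
      rcases Nat.even_or_odd k with he | ho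
      · exact Dvd.dvd.mul_left he.two_dvd _
      · exact Dvd.dvd.mul_right (ho.add_one).two_dvd _
    have : (k+1) * ((k+1) - 1) = (k+1)*k := by simp
    rw [this, Nat.cast_div hdvd (by norm_num)]
    push_cast
    ring

lemma pair_count {n : ℕ} (S : Finset (Fin n)) :
    (Finset.univ.filter (fun p : Fin n × Fin n => p.1 ∈ S ∧ p.2 ∈ S ∧ p.1 < p.2)).card
      = S.card.choose 2 := by
  set P := Finset.univ.filter (fun p : Fin n × Fin n => p.1 ∈ S ∧ p.2 ∈ S ∧ p.1 < p.2) with hP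
  set P' := Finset.univ.filter (fun p : Fin n × Fin n => p.1 ∈ S ∧ p.2 ∈ S ∧ p.2 < p.1) with hP'
  have hcard : P.card = P'.card := by
    apply Finset.card_nbij' (fun p => p.swap) (fun p => p.swap)
    · intro p hp
      simp only [hP, hP', Finset.mem_filter, Finset.mem_univ, true_and, Finset.coe_filter, Set.mem_setOf_eq] at hp ⊢
      exact ⟨hp.2.1, hp.1, hp.2.2⟩
    · intro p hp
      simp only [hP, hP', Finset.mem_filter, Finset.mem_univ, true_and, Finset.coe_filter, Set.mem_setOf_eq] at hp ⊢
      exact ⟨hp.2.1, hp.1, hp.2.2⟩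
    · intro p _; simp
    · intro p _; simp
  have hunion : S.offDiag = P ∪ P' := by
    ext p
    simp only [Finset.mem_offDiag, hP, hP', Finset.mem_union, Finset.mem_filter,
      Finset.mem_univ, true_and]
    constructor
    · rintro ⟨h1, h2, h3⟩
      rcases lt_or_gt_of_ne h3 with h | h
      · exact Or.inl ⟨h1, h2, h⟩
      · exact Or.inr ⟨h1, h2, h⟩
    · rintro (⟨h1, h2, h3⟩ | ⟨h1, h2, h3⟩)
      · exact ⟨h1, h2, ne_of_lt h3⟩
      · exact ⟨h1, h2, ne_of_gt h3⟩
  have hdisj : Disjoint P P' := by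
    rw [Finset.disjoint_left]
    intro p hp hp'
    simp only [hP, hP', Finset.mem_filter] at hp hp'
    exact absurd (lt_trans hp.2.2.2 hp'.2.2.2) (lt_irrefl _)
  have hoff : S.offDiag.card = P.card + P'.card := by
    rw [hunion, Finset.card_union_of_disjoint hdisj]
  rw [Finset.offDiag_card] at hoff
  rw [Nat.choose_two_right]
  have hmul : S.card * (S.card - 1) = S.card * S.card - S.card := by
    rw [Nat.mul_sub, mul_one]
  rw [hmul]
  omega


lemma Ev_nonneg'' {n : ℕ} {f : (Fin n → Bool) → ℝ} (h : ∀ x, 0 ≤ f x) : 0 ≤ Ev n f := by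
  unfold Ev
  apply div_nonneg (Finset.sum_nonneg fun x _ => h x) (by positivity)

lemma nrm_nonneg' {n : ℕ} (p : ℝ) (f : (Fin n → Bool) → ℝ) : 0 ≤ nrm n p f :=
  Real.rpow_nonneg (Ev_nonneg'' fun x => Real.rpow_nonneg (abs_nonneg _) _) _

lemma nrm_one_eq_zero {n : ℕ} {h : (Fin n → Bool) → ℝ} (hz : nrm n 1 h = 0) :
    ∀ x, h x = 0 := by
  rw [nrm_one] at hz
  unfold Ev at hz
  rw [div_eq_zero_iff] at hz
  intro x
  rcases hz with hz | hz
  · have := (Finset.sum_eq_zero_iff_of_nonneg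
      (fun y (_ : y ∈ Finset.univ) => abs_nonneg (h y))).1 hz x (Finset.mem_univ x)
    exact abs_eq_zero.1 this
  · exact absurd hz (by positivity)

lemma fhat_zero_of_zero {n : ℕ} {h : (Fin n → Bool) → ℝ} (hz : ∀ x, h x = 0)
    (T : Finset (Fin n)) : fhat n h T = 0 := by
  unfold fhat Ev
  simp [hz]

lemma fhat_pD2 {n : ℕ} {i j : Fin n} (hij : i ≠ j) (f : (Fin n → Bool) → ℝ)
    (T : Finset (Fin n)) :
    fhat n (pD n i (pD n j f)) T =
      if i ∈ T ∨ j ∈ T then 0 else 4 * fhat n f (insert i (insert j T)) := by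
  rw [fhat_pD]
  by_cases hi : i ∈ T
  · simp [hi]
  · rw [if_neg hi, fhat_pD]
    by_cases hj : j ∈ T
    · simp [hi, hj, Finset.mem_insert, hij.symm]
    · have hjit : j ∉ insert i T := by
        simp [Finset.mem_insert, hij.symm, hj]
      rw [if_neg hjit, if_neg (by tauto : ¬(i ∈ T ∨ j ∈ T))]
      rw [Finset.insert_comm]
      ring

lemma claim1 {n : ℕ} (f g : (Fin n → Bool) → ℝ) {i j : Fin n} (hij : i ≠ j) :
    ∑ T : Finset (Fin n),
        (fhat n (pD n i (pD n j f)) T * fhat n (pD n i (pD n j g)) T) /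
          (((T.card:ℝ)+1)*((T.card:ℝ)+2))
      = 8 * ∑ S ∈ Finset.univ.filter (fun S : Finset (Fin n) => i ∈ S ∧ j ∈ S),
          (fhat n f S * fhat n g S) / ((S.card.choose 2 : ℕ) : ℝ) := by
  rw [Finset.mul_sum]
  rw [← Finset.sum_filter_add_sum_filter_not Finset.univ (fun T => i ∉ T ∧ j ∉ T)]
  have hz : ∀ T ∈ Finset.univ.filter (fun T : Finset (Fin n) => ¬(i ∉ T ∧ j ∉ T)),
      (fhat n (pD n i (pD n j f)) T * fhat n (pD n i (pD n j g)) T) /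
        (((T.card:ℝ)+1)*((T.card:ℝ)+2)) = 0 := by
    intro T hT
    simp only [Finset.mem_filter, Finset.mem_univ, true_and] at hT
    push_neg at hT
    have hor : i ∈ T ∨ j ∈ T := by tauto
    rw [fhat_pD2 hij f, if_pos hor]
    simp
  rw [Finset.sum_eq_zero hz, add_zero]
  apply Finset.sum_nbij' (i := fun T => insert i (insert j T))
    (j := fun S => (S.erase i).erase j)
  · intro T hT
    simp only [Finset.mem_filter, Finset.mem_univ, true_and] at hT ⊢
    constructor
    · exact Finset.mem_insert_self i _
    · exact Finset.mem_insert_of_mem (Finset.mem_insert_self j T)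
  · intro S hS
    simp only [Finset.mem_filter, Finset.mem_univ, true_and] at hS ⊢
    constructor
    · simp [Finset.mem_erase]
    · simp [Finset.mem_erase, hij.symm]
  · intro T hT
    simp only [Finset.mem_filter, Finset.mem_univ, true_and] at hT
    have hi' : i ∉ insert j T := by simp [Finset.mem_insert, hij, hT.1]
    rw [Finset.erase_insert hi', Finset.erase_insert hT.2]
  · intro S hS
    simp only [Finset.mem_filter, Finset.mem_univ, true_and] at hS
    have hj' : j ∈ S.erase i := Finset.mem_erase.2 ⟨hij.symm, hS.2⟩
    rw [Finset.insert_erase hj', Finset.insert_erase hS.1]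
  · intro T hT
    simp only [Finset.mem_filter, Finset.mem_univ, true_and] at hT
    have hi' : i ∉ insert j T := by simp [Finset.mem_insert, hij, hT.1]
    have hcard : (insert i (insert j T)).card = T.card + 2 := by
      rw [Finset.card_insert_of_notMem hi', Finset.card_insert_of_notMem hT.2]
    rw [fhat_pD2 hij f, fhat_pD2 hij g, if_neg (by tauto), if_neg (by tauto)]
    rw [hcard, cast_choose_two]
    push_cast
    rw [show ((T.card:ℝ)+2) - 1 = (T.card:ℝ)+1 from by ring]
    have h1 : ((T.card:ℝ)+1) ≠ 0 := by positivity
    have h2 : ((T.card:ℝ)+2) ≠ 0 := by positivity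
    field_simp
    ring

lemma nrm_zero_fn {n : ℕ} (p : ℝ) {h : (Fin n → Bool) → ℝ} (hz : ∀ x, h x = 0)
    (hp : p ≠ 0) : nrm n p h = 0 := by
  unfold nrm Ev
  have : ∀ x : Fin n → Bool, |h x| ^ p = 0 := by
    intro x
    rw [hz x, abs_zero, Real.zero_rpow hp]
  rw [Finset.sum_congr rfl fun x _ => this x]
  simp
  exact Real.zero_rpow (by simpa using hp)

lemma t_exp_bound {t : ℝ} (ht : 0 ≤ t) : t * Real.exp (-t) ≤ (Real.exp 1)⁻¹ := by
  have h2 := Real.add_one_le_exp (t - 1)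
  have h3 : t ≤ Real.exp (t-1) := by linarith
  have h4 : t * Real.exp (-t) ≤ Real.exp (t-1) * Real.exp (-t) :=
    mul_le_mul_of_nonneg_right h3 (Real.exp_pos _).le
  rw [← Real.exp_add, show t - 1 + -t = -1 by ring] at h4
  simpa [Real.exp_neg] using h4

lemma core_analytic {n : ℕ} (h k : (Fin n → Bool) → ℝ) :
    |∑ T : Finset (Fin n),
        (fhat n h T * fhat n k T) / (((T.card:ℝ)+1)*((T.card:ℝ)+2))|
    ≤ 9 * ((nrm n 2 h * nrm n 2 k) /
        (1 + Real.log ((nrm n 2 h * nrm n 2 k) / (nrm n 1 h * nrm n 1 k)))) := by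
  have hF2 := nrm_nonneg' 2 h
  have hG2 := nrm_nonneg' 2 k
  have hF1 := nrm_nonneg' 1 h
  have hG1 := nrm_nonneg' 1 k
  rcases eq_or_lt_of_le (mul_nonneg hF2 hG2) with hA | hA
  · have h0 : ∀ T : Finset (Fin n), fhat n h T * fhat n k T = 0 := by
      rcases mul_eq_zero.1 hA.symm with hz | hz
      · intro T; rw [fhat_zero_of_zero (nrm_two_eq_zero hz) T, zero_mul]
      · intro T; rw [fhat_zero_of_zero (nrm_two_eq_zero hz) T, mul_zero]
    rw [Finset.sum_eq_zero (fun T _ => by rw [h0 T, zero_div]), abs_zero, ← hA]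
    simp [zero_div]
  · have hF2p : 0 < nrm n 2 h := by
      rcases hF2.eq_or_lt with he | hl
      · exfalso; rw [← he, zero_mul] at hA; exact lt_irrefl 0 hA
      · exact hl
    have hG2p : 0 < nrm n 2 k := by
      rcases hG2.eq_or_lt with he | hl
      · exfalso; rw [← he, mul_zero] at hA; exact lt_irrefl 0 hA
      · exact hl
    have hF1p : 0 < nrm n 1 h := by
      rcases hF1.eq_or_lt with he | hl
      · exfalso
        have hz := nrm_one_eq_zero he.symm
        exact absurd (nrm_zero_fn 2 hz (by norm_num)) (ne_of_gt hF2p)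
      · exact hl
    have hG1p : 0 < nrm n 1 k := by
      rcases hG1.eq_or_lt with he | hl
      · exfalso
        have hz := nrm_one_eq_zero he.symm
        exact absurd (nrm_zero_fn 2 hz (by norm_num)) (ne_of_gt hG2p)
      · exact hl
    set A := nrm n 2 h * nrm n 2 k with hAd
    set B := nrm n 1 h * nrm n 1 k with hBd
    set L := Real.log (A/B) with hLd
    have hBp : 0 < B := mul_pos hF1p hG1p
    have hBA : B ≤ A := mul_le_mul (nrm_one_le_nrm_two h) (nrm_one_le_nrm_two k) hG1 hF2
    have hL0 : 0 ≤ L := Real.log_nonneg ((one_le_div hBp).2 hBA)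
    have h1L : 0 < 1 + L := by linarith
    -- integral representation
    have hrep : ∑ T : Finset (Fin n),
        (fhat n h T * fhat n k T) / (((T.card:ℝ)+1)*((T.card:ℝ)+2))
        = ∫ u in (0:ℝ)..1, (1-u) * Lam n u h k := by
      rw [show (fun u : ℝ => (1-u) * Lam n u h k)
          = fun u : ℝ => (1-u) * ∑ T : Finset (Fin n), u^T.card * (fhat n h T * fhat n k T)
          from funext fun u => by rw [Lam_fourier]]
      rw [sum_to_integral]
    -- pointwise bound
    have hptw : ∀ u : ℝ, 0 < u → u ≤ 1 →
        |Lam n u h k| ≤ A * Real.exp (-(L*(1-u)/(1+u))) := by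
      intro u hu0 hu1
      rcases eq_or_lt_of_le hu1 with h1 | h1
      · subst h1
        simp only [sub_self, mul_zero, zero_div, neg_zero, Real.exp_zero, mul_one]
        have hth := tal_hyper n (by norm_num : (0:ℝ) ≤ 1) le_rfl h k
        rw [show (1:ℝ)+1 = 2 by norm_num] at hth
        exact hth
      · have hmain := tal_hyper n hu0.le hu1 h k
        have h1u : (0:ℝ) < 1 + u := by linarith
        have hEv1h : 0 ≤ Ev n (fun x => |h x| ^ (1+u)) :=
          Ev_nonneg'' fun x => Real.rpow_nonneg (abs_nonneg _) _
        have hEv1k : 0 ≤ Ev n (fun x => |k x| ^ (1+u)) :=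
          Ev_nonneg'' fun x => Real.rpow_nonneg (abs_nonneg _) _
        have hhb : nrm n (1+u) h ≤ ((nrm n 1 h) ^ (1-u) * ((nrm n 2 h)^2) ^ u) ^ (1/(1+u)) := by
          calc nrm n (1+u) h = (Ev n (fun x => |h x| ^ (1+u))) ^ (1/(1+u)) := rfl
          _ ≤ ((Ev n (fun x => |h x|)) ^ (1-u) * (Ev n (fun x => |h x| ^ (2:ℝ))) ^ u) ^ (1/(1+u)) :=
              Real.rpow_le_rpow hEv1h (interp hu0 h1 h) (by positivity)
          _ = _ := by rw [nrm_one, nrm_two_sq]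
        have hkb : nrm n (1+u) k ≤ ((nrm n 1 k) ^ (1-u) * ((nrm n 2 k)^2) ^ u) ^ (1/(1+u)) := by
          calc nrm n (1+u) k = (Ev n (fun x => |k x| ^ (1+u))) ^ (1/(1+u)) := rfl
          _ ≤ ((Ev n (fun x => |k x|)) ^ (1-u) * (Ev n (fun x => |k x| ^ (2:ℝ))) ^ u) ^ (1/(1+u)) :=
              Real.rpow_le_rpow hEv1k (interp hu0 h1 k) (by positivity)
          _ = _ := by rw [nrm_one, nrm_two_sq]
        have hXh : (0:ℝ) < (nrm n 1 h) ^ (1-u) * ((nrm n 2 h)^2) ^ u :=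
          mul_pos (Real.rpow_pos_of_pos hF1p _) (Real.rpow_pos_of_pos (pow_pos hF2p 2) _)
        have hXk : (0:ℝ) < (nrm n 1 k) ^ (1-u) * ((nrm n 2 k)^2) ^ u :=
          mul_pos (Real.rpow_pos_of_pos hG1p _) (Real.rpow_pos_of_pos (pow_pos hG2p 2) _)
        have hprod : nrm n (1+u) h * nrm n (1+u) k ≤ (B ^ (1-u) * (A^2) ^ u) ^ (1/(1+u)) := by
          calc nrm n (1+u) h * nrm n (1+u) k
              ≤ ((nrm n 1 h) ^ (1-u) * ((nrm n 2 h)^2) ^ u) ^ (1/(1+u)) *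
                ((nrm n 1 k) ^ (1-u) * ((nrm n 2 k)^2) ^ u) ^ (1/(1+u)) :=
              mul_le_mul hhb hkb (nrm_nonneg' _ _) (Real.rpow_nonneg hXh.le _)
          _ = (((nrm n 1 h) ^ (1-u) * ((nrm n 2 h)^2) ^ u) *
                ((nrm n 1 k) ^ (1-u) * ((nrm n 2 k)^2) ^ u)) ^ (1/(1+u)) :=
              (Real.mul_rpow hXh.le hXk.le).symm
          _ = (B ^ (1-u) * (A^2) ^ u) ^ (1/(1+u)) := by
              congr 1
              rw [hBd, hAd, Real.mul_rpow hF1p.le hG1p.le, mul_pow,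
                Real.mul_rpow (pow_nonneg hF2p.le 2) (pow_nonneg hG2p.le 2)]
              ring
        have hfin : (B ^ (1-u) * (A^2) ^ u) ^ (1/(1+u)) = A * Real.exp (-(L*(1-u)/(1+u))) := by
          have hBpow : (0:ℝ) < B ^ (1-u) * (A^2)^u :=
            mul_pos (Real.rpow_pos_of_pos hBp _) (Real.rpow_pos_of_pos (pow_pos hA 2) _)
          rw [Real.rpow_def_of_pos hBpow,
            Real.log_mul (ne_of_gt (Real.rpow_pos_of_pos hBp _))
              (ne_of_gt (Real.rpow_pos_of_pos (pow_pos hA 2) _)),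
            Real.log_rpow hBp, Real.log_rpow (pow_pos hA 2), Real.log_pow]
          rw [show A * Real.exp (-(L*(1-u)/(1+u)))
              = Real.exp (Real.log A + -(L*(1-u)/(1+u))) from by
            rw [Real.exp_add, Real.exp_log hA]]
          congr 1
          rw [hLd, Real.log_div (ne_of_gt hA) (ne_of_gt hBp)]
          field_simp
          ring
        calc |Lam n u h k| ≤ nrm n (1+u) h * nrm n (1+u) k := hmain
        _ ≤ (B ^ (1-u) * (A^2) ^ u) ^ (1/(1+u)) := hprod
        _ = A * Real.exp (-(L*(1-u)/(1+u))) := hfin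
    rw [hrep]
    rcases le_or_gt L 8 with hL8 | hL8
    · have hC : ∀ u ∈ Set.uIoc (0:ℝ) 1, ‖(1-u) * Lam n u h k‖ ≤ A := by
        intro u hu
        rw [Set.uIoc_of_le (by norm_num : (0:ℝ) ≤ 1)] at hu
        have hptu := hptw u hu.1 hu.2
        have hexp : Real.exp (-(L*(1-u)/(1+u))) ≤ 1 := by
          rw [Real.exp_le_one_iff]
          have hnn : 0 ≤ L*(1-u)/(1+u) :=
            div_nonneg (mul_nonneg hL0 (by linarith [hu.2])) (by linarith [hu.1])
          linarith
        rw [Real.norm_eq_abs, abs_mul, abs_of_nonneg (by linarith [hu.2] : (0:ℝ) ≤ 1-u)]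
        have hexp_pos := Real.exp_pos (-(L*(1-u)/(1+u)))
        calc (1-u) * |Lam n u h k| ≤ 1 * (A * Real.exp (-(L*(1-u)/(1+u)))) := by
              apply mul_le_mul (by linarith [hu.1]) hptu (abs_nonneg _) one_pos.le
        _ ≤ A := by nlinarith
      have hI := intervalIntegral.norm_integral_le_of_norm_le_const hC
      rw [Real.norm_eq_abs] at hI
      norm_num at hI
      calc |∫ u in (0:ℝ)..1, (1-u) * Lam n u h k| ≤ A := hI
      _ ≤ 9 * (A/(1+L)) := by
          rw [← mul_div_assoc, le_div_iff₀ h1L]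
          nlinarith
    · have hLpos : 0 < L := by linarith
      have he2 : (2:ℝ) ≤ Real.exp 1 := by
        have := Real.add_one_le_exp 1; linarith
      have hepos : (0:ℝ) < Real.exp 1 := Real.exp_pos 1
      have hC : ∀ u ∈ Set.uIoc (0:ℝ) 1,
          ‖(1-u) * Lam n u h k‖ ≤ 2*A/(Real.exp 1 * L) := by
        intro u hu
        rw [Set.uIoc_of_le (by norm_num : (0:ℝ) ≤ 1)] at hu
        have hptu := hptw u hu.1 hu.2
        have hu1 : u ≤ 1 := hu.2
        have hu0 : 0 < u := hu.1
        rw [Real.norm_eq_abs, abs_mul, abs_of_nonneg (by linarith : (0:ℝ) ≤ 1-u)]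
        have hexp_mono : Real.exp (-(L*(1-u)/(1+u))) ≤ Real.exp (-(L*(1-u)/2)) := by
          apply Real.exp_le_exp.2
          apply neg_le_neg
          exact div_le_div_of_nonneg_left (mul_nonneg hL0 (by linarith))
            (by linarith) (by linarith)
        have ht0 : 0 ≤ L*(1-u)/2 :=
          div_nonneg (mul_nonneg hL0 (by linarith)) (by norm_num)
        have htb := t_exp_bound ht0
        have hkey : (1-u) * Real.exp (-(L*(1-u)/2)) ≤ 2/(Real.exp 1 * L) := by
          have hfinal : (1-u) * Real.exp (-(L*(1-u)/2))
              = (2/L) * ((L*(1-u)/2) * Real.exp (-(L*(1-u)/2))) := by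
            field_simp
          rw [hfinal]
          calc (2/L) * ((L*(1-u)/2) * Real.exp (-(L*(1-u)/2)))
              ≤ (2/L) * (Real.exp 1)⁻¹ :=
              mul_le_mul_of_nonneg_left htb (by positivity)
          _ = 2/(Real.exp 1 * L) := by field_simp
        calc (1-u) * |Lam n u h k|
            ≤ (1-u) * (A * Real.exp (-(L*(1-u)/(1+u)))) :=
            mul_le_mul_of_nonneg_left hptu (by linarith)
        _ ≤ (1-u) * (A * Real.exp (-(L*(1-u)/2))) :=
            mul_le_mul_of_nonneg_left
              (mul_le_mul_of_nonneg_left hexp_mono hA.le) (by linarith)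
        _ = A * ((1-u) * Real.exp (-(L*(1-u)/2))) := by ring
        _ ≤ A * (2/(Real.exp 1 * L)) := mul_le_mul_of_nonneg_left hkey hA.le
        _ = 2*A/(Real.exp 1 * L) := by ring
      have hI := intervalIntegral.norm_integral_le_of_norm_le_const hC
      rw [Real.norm_eq_abs] at hI
      norm_num at hI
      calc |∫ u in (0:ℝ)..1, (1-u) * Lam n u h k| ≤ 2*A/(Real.exp 1 * L) := hI
      _ ≤ 9 * (A/(1+L)) := by
          rw [← mul_div_assoc, div_le_div_iff₀ (by positivity) h1L]
          nlinarith [mul_pos hA hLpos, mul_le_mul_of_nonneg_right he2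
            (mul_nonneg hA.le hLpos.le), mul_pos hA (by linarith : (0:ℝ) < L - 8)]


lemma swap_sum {n : ℕ} (f g : (Fin n → Bool) → ℝ) :
    ∑ i : Fin n, ∑ j ∈ Finset.univ.filter (fun j : Fin n => i < j),
      ∑ S ∈ Finset.univ.filter (fun S : Finset (Fin n) => i ∈ S ∧ j ∈ S),
        (fhat n f S * fhat n g S) / ((S.card.choose 2 : ℕ) : ℝ)
    = ∑ S ∈ Finset.univ.filter (fun S : Finset (Fin n) => 2 ≤ S.card),
        fhat n f S * fhat n g S := by
  have step1 : ∀ i : Fin n, (∑ j ∈ Finset.univ.filter (fun j : Fin n => i < j),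
      ∑ S ∈ Finset.univ.filter (fun S : Finset (Fin n) => i ∈ S ∧ j ∈ S),
        (fhat n f S * fhat n g S) / ((S.card.choose 2 : ℕ) : ℝ))
      = ∑ j : Fin n, ∑ S : Finset (Fin n),
          if i ∈ S ∧ j ∈ S ∧ i < j then
            (fhat n f S * fhat n g S) / ((S.card.choose 2 : ℕ) : ℝ) else 0 := by
    intro i
    rw [Finset.sum_filter]
    apply Finset.sum_congr rfl
    intro j _
    split_ifs with hij
    · rw [Finset.sum_filter]
      apply Finset.sum_congr rfl; intro S _
      split_ifs <;> tauto
    · symm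
      apply Finset.sum_eq_zero; intro S _
      split_ifs <;> tauto
  rw [Finset.sum_congr rfl fun i _ => step1 i]
  rw [Finset.sum_congr rfl fun i (_ : i ∈ Finset.univ) => Finset.sum_comm]
  rw [Finset.sum_comm]
  have step2 : ∀ S : Finset (Fin n),
      (∑ i : Fin n, ∑ j : Fin n,
        if i ∈ S ∧ j ∈ S ∧ i < j then
          (fhat n f S * fhat n g S) / ((S.card.choose 2 : ℕ) : ℝ) else 0)
      = (if 2 ≤ S.card then fhat n f S * fhat n g S else 0) := by
    intro S
    have e1 : (∑ i : Fin n, ∑ j : Fin n,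
        if i ∈ S ∧ j ∈ S ∧ i < j then
          (fhat n f S * fhat n g S) / ((S.card.choose 2 : ℕ) : ℝ) else 0)
        = ∑ p : Fin n × Fin n,
            if p.1 ∈ S ∧ p.2 ∈ S ∧ p.1 < p.2 then
              (fhat n f S * fhat n g S) / ((S.card.choose 2 : ℕ) : ℝ) else 0 :=
      (Fintype.sum_prod_type (fun p : Fin n × Fin n =>
        if p.1 ∈ S ∧ p.2 ∈ S ∧ p.1 < p.2 then
          (fhat n f S * fhat n g S) / ((S.card.choose 2 : ℕ) : ℝ) else 0)).symm
    rw [e1, ← Finset.sum_filter, Finset.sum_const, nsmul_eq_mul, pair_count S]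
    by_cases h2 : 2 ≤ S.card
    · rw [if_pos h2]
      have hpos : 0 < S.card.choose 2 := Nat.choose_pos h2
      rw [mul_div_cancel₀]
      exact_mod_cast hpos.ne'
    · rw [if_neg h2]
      have hz : S.card.choose 2 = 0 := Nat.choose_eq_zero_of_lt (by omega)
      rw [hz]
      simp
  rw [Finset.sum_congr rfl fun S _ => step2 S, ← Finset.sum_filter]

/-- Talagrand-type `L¹`-`L²` upper bound for the level-`≥ 2` Fourier
weight. (Terms with `∂_{ij} f ≡ 0` or `∂_{ij} g ≡ 0` vanish: their numerator is `0`.) -/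
theorem talagrand_upper_bound_level2 (n : ℕ) (f g : (Fin n → Bool) → ℝ) :
    |∑ S ∈ Finset.univ.filter (fun S : Finset (Fin n) => 2 ≤ S.card),
        fhat n f S * fhat n g S|
    ≤ (9 / 8) * ∑ i : Fin n, ∑ j ∈ Finset.univ.filter (fun j : Fin n => i < j),
        (nrm n 2 (pD n i (pD n j f)) * nrm n 2 (pD n i (pD n j g))) /
          (1 + Real.log
            ((nrm n 2 (pD n i (pD n j f)) * nrm n 2 (pD n i (pD n j g))) /
             (nrm n 1 (pD n i (pD n j f)) * nrm n 1 (pD n i (pD n j g))))) := by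
  rw [← swap_sum f g]
  calc |∑ i : Fin n, ∑ j ∈ Finset.univ.filter (fun j : Fin n => i < j),
      ∑ S ∈ Finset.univ.filter (fun S : Finset (Fin n) => i ∈ S ∧ j ∈ S),
        (fhat n f S * fhat n g S) / ((S.card.choose 2 : ℕ) : ℝ)|
      ≤ ∑ i : Fin n, |∑ j ∈ Finset.univ.filter (fun j : Fin n => i < j),
        ∑ S ∈ Finset.univ.filter (fun S : Finset (Fin n) => i ∈ S ∧ j ∈ S),
          (fhat n f S * fhat n g S) / ((S.card.choose 2 : ℕ) : ℝ)| :=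
      Finset.abs_sum_le_sum_abs _ _
  _ ≤ ∑ i : Fin n, ∑ j ∈ Finset.univ.filter (fun j : Fin n => i < j),
        |∑ S ∈ Finset.univ.filter (fun S : Finset (Fin n) => i ∈ S ∧ j ∈ S),
          (fhat n f S * fhat n g S) / ((S.card.choose 2 : ℕ) : ℝ)| :=
      Finset.sum_le_sum fun i _ => Finset.abs_sum_le_sum_abs _ _
  _ ≤ ∑ i : Fin n, ∑ j ∈ Finset.univ.filter (fun j : Fin n => i < j),
        (9/8) * ((nrm n 2 (pD n i (pD n j f)) * nrm n 2 (pD n i (pD n j g))) /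
          (1 + Real.log
            ((nrm n 2 (pD n i (pD n j f)) * nrm n 2 (pD n i (pD n j g))) /
             (nrm n 1 (pD n i (pD n j f)) * nrm n 1 (pD n i (pD n j g)))))) := by
      apply Finset.sum_le_sum; intro i _
      apply Finset.sum_le_sum; intro j hj
      simp only [Finset.mem_filter, Finset.mem_univ, true_and] at hj
      have hne : i ≠ j := ne_of_lt hj
      have h8 := claim1 f g hne
      have hQ : (∑ S ∈ Finset.univ.filter (fun S : Finset (Fin n) => i ∈ S ∧ j ∈ S),
          (fhat n f S * fhat n g S) / ((S.card.choose 2 : ℕ) : ℝ))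
          = (∑ T : Finset (Fin n),
            (fhat n (pD n i (pD n j f)) T * fhat n (pD n i (pD n j g)) T) /
              (((T.card:ℝ)+1)*((T.card:ℝ)+2))) / 8 := by
        rw [h8]; ring
      rw [hQ, abs_div, abs_of_nonneg (by norm_num : (0:ℝ) ≤ 8)]
      have hca := core_analytic (pD n i (pD n j f)) (pD n i (pD n j g))
      calc |∑ T : Finset (Fin n),
            (fhat n (pD n i (pD n j f)) T * fhat n (pD n i (pD n j g)) T) /
              (((T.card:ℝ)+1)*((T.card:ℝ)+2))| / 8
          ≤ (9 * ((nrm n 2 (pD n i (pD n j f)) * nrm n 2 (pD n i (pD n j g))) /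
            (1 + Real.log
              ((nrm n 2 (pD n i (pD n j f)) * nrm n 2 (pD n i (pD n j g))) /
               (nrm n 1 (pD n i (pD n j f)) * nrm n 1 (pD n i (pD n j g))))))) / 8 := by
            gcongr
      _ = _ := by ring
  _ = _ := by
      rw [Finset.mul_sum]
      apply Finset.sum_congr rfl; intro i _
      rw [Finset.mul_sum]


end TalagrandProof
end
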